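/- Let m ≥ 1, n = m+1, h > 0, M_α > 0, L ≥ 0, ε ≥ 0, and let D ∈ ℝⁿ have entries D_1,…,D_n. Let 1 ≤ i₀ ≤ m and assume |D_i − D_{i+2}| ≤ 2hL for all 1 ≤ i < i₀ and 0 ≤ D_j ≤ ε for all i₀ ≤ j ≤ n. Define Term₂(v) = (M_α/4)·(Σ_{i=1}^{m−1}(D_i − D_{i+2})v_i² + (D_m + D_{m+1})v_m²). Then for every v ∈ ℝ^m, |Term₂(v)| ≤ (M_α/2)·L·(h·Σ_{i=1}^{m} v_i²) + (M_α/2)·ε·(m − i₀ + 1)·max_{1≤i≤m} v_i². -/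

import Mathlib

open Finset

/-- 1-based access to the entries of a finite vector, with value `0` at index `0`
and out of range. -/
def pad1 {n : ℕ} (v : Fin n → ℝ) : ℕ → ℝ :=
  fun k => if hk : k - 1 < n then (if k = 0 then 0 else v ⟨k - 1, hk⟩) else 0

/-- `Term₂(v) = (M_α/4)(Σ_{i=1}^{m−1}(D_i − D_{i+2})v_i² + (D_m + D_{m+1})v_m²)`. -/
noncomputable def term2 (m : ℕ) (Ma : ℝ) (D : Fin (m + 1) → ℝ) (v : Fin m → ℝ) : ℝ :=
  (Ma / 4) *
    ((∑ i ∈ Finset.Icc 1 (m - 1), (pad1 D i - pad1 D (i + 2)) * (pad1 v i) ^ 2)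
      + (pad1 D m + pad1 D (m + 1)) * (pad1 v m) ^ 2)

theorem stmt_15 (m : ℕ) (hm : 1 ≤ m) (h Ma L ε : ℝ)
    (hh : 0 < h) (hMa : 0 < Ma) (hL : 0 ≤ L) (hε : 0 ≤ ε)
    (D : Fin (m + 1) → ℝ)
    (i₀ : ℕ) (hi₀1 : 1 ≤ i₀) (hi₀m : i₀ ≤ m)
    (hLip : ∀ i : ℕ, 1 ≤ i → i < i₀ → |pad1 D i - pad1 D (i + 2)| ≤ 2 * h * L)
    (hEps : ∀ j : ℕ, i₀ ≤ j → j ≤ m + 1 → 0 ≤ pad1 D j ∧ pad1 D j ≤ ε) :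
    ∀ v : Fin m → ℝ,
      |term2 m Ma D v| ≤
        (Ma / 2) * L * (h * ∑ i : Fin m, (v i) ^ 2)
          + (Ma / 2) * ε * ((m : ℝ) - (i₀ : ℝ) + 1) *
            (Finset.univ.sup' ⟨⟨0, hm⟩, Finset.mem_univ _⟩ fun i => (v i) ^ 2) := by
  intro v
  set M := Finset.univ.sup' ⟨⟨0, hm⟩, Finset.mem_univ _⟩ (fun i => (v i) ^ 2) with hM
  have hM0 : 0 ≤ M := le_trans (sq_nonneg (v ⟨0, hm⟩))
    (Finset.le_sup' (fun i : Fin m => (v i) ^ 2) (Finset.mem_univ ⟨0, hm⟩))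
  have hvM : ∀ k : ℕ, (pad1 v k) ^ 2 ≤ M := by
    intro k
    unfold pad1
    split_ifs with h1 h2
    · simpa using hM0
    · exact Finset.le_sup' (fun i => (v i) ^ 2) (Finset.mem_univ _)
    · simpa using hM0
  set Sv := ∑ i : Fin m, (v i) ^ 2 with hSv
  have hSum : ∑ i ∈ Finset.Icc 1 m, (pad1 v i) ^ 2 = Sv := by
    rw [← Finset.Ico_add_one_right_eq_Icc, Finset.sum_Ico_eq_sum_range]
    have : m + 1 - 1 = m := by omega
    rw [this, hSv, ← Fin.sum_univ_eq_sum_range (fun i => (pad1 v (1 + i)) ^ 2) m]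
    apply Finset.sum_congr rfl
    intro i _
    have hi : (i : ℕ) < m := i.isLt
    have h1 : 1 + (i : ℕ) - 1 = (i : ℕ) := by omega
    simp only [pad1, h1, dif_pos hi, if_neg (by omega : ¬ 1 + (i : ℕ) = 0)]
  have hSv0 : 0 ≤ Sv := Finset.sum_nonneg fun i _ => sq_nonneg _
  -- termwise bound on the main sum
  have hterm : ∀ i ∈ Finset.Icc 1 (m - 1),
      |(pad1 D i - pad1 D (i + 2)) * (pad1 v i) ^ 2| ≤
        2 * h * L * (pad1 v i) ^ 2 + (if i₀ ≤ i then ε * M else 0) := by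
    intro i hi
    simp only [Finset.mem_Icc] at hi
    rw [abs_mul, abs_sq]
    by_cases hc : i < i₀
    · have h1 := hLip i hi.1 hc
      have : |pad1 D i - pad1 D (i + 2)| * (pad1 v i) ^ 2 ≤ 2 * h * L * (pad1 v i) ^ 2 :=
        mul_le_mul_of_nonneg_right h1 (sq_nonneg _)
      split_ifs with hc2
      · nlinarith [mul_nonneg hε hM0]
      · simpa using this
    · push_neg at hc
      have hi2 : i + 2 ≤ m + 1 := by omega
      have hDi := hEps i hc (by omega)
      have hDi2 := hEps (i + 2) (by omega) hi2
      have habs : |pad1 D i - pad1 D (i + 2)| ≤ ε := abs_sub_le_iff.2 ⟨by linarith [hDi.2, hDi2.1], by linarith [hDi2.2, hDi.1]⟩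
      have h2 : |pad1 D i - pad1 D (i + 2)| * (pad1 v i) ^ 2 ≤ ε * M := by
        calc |pad1 D i - pad1 D (i + 2)| * (pad1 v i) ^ 2
            ≤ ε * (pad1 v i) ^ 2 := mul_le_mul_of_nonneg_right habs (sq_nonneg _)
          _ ≤ ε * M := mul_le_mul_of_nonneg_left (hvM i) hε
      rw [if_pos hc]
      nlinarith [mul_nonneg (mul_nonneg (mul_nonneg (by norm_num : (0:ℝ) ≤ 2) hh.le) hL) (sq_nonneg (pad1 v i))]
  have hsum1 : ∑ i ∈ Finset.Icc 1 (m - 1), (2 * h * L * (pad1 v i) ^ 2)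
      ≤ 2 * h * L * Sv := by
    rw [← Finset.mul_sum, ← hSum]
    apply mul_le_mul_of_nonneg_left _ (by positivity)
    apply Finset.sum_le_sum_of_subset_of_nonneg
    · apply Finset.Icc_subset_Icc_right; omega
    · intro i _ _; exact sq_nonneg _
  have hcard : (Finset.Icc 1 (m - 1)).filter (fun i => i₀ ≤ i) = Finset.Icc i₀ (m - 1) := by
    ext i
    simp only [Finset.mem_filter, Finset.mem_Icc]
    omega
  have hsum2 : ∑ i ∈ Finset.Icc 1 (m - 1), (if i₀ ≤ i then ε * M else 0)
      ≤ ((m : ℝ) - i₀) * (ε * M) := by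
    rw [← Finset.sum_filter, hcard]
    simp only [Finset.sum_const, Nat.card_Icc, nsmul_eq_mul]
    apply mul_le_mul_of_nonneg_right _ (mul_nonneg hε hM0)
    have : m - 1 + 1 - i₀ = m - i₀ := by omega
    rw [this]
    rw [Nat.cast_sub hi₀m]
  -- the boundary term
  have hT : |(pad1 D m + pad1 D (m + 1)) * (pad1 v m) ^ 2| ≤ 2 * (ε * M) := by
    have hDm := hEps m hi₀m (by omega)
    have hDm1 := hEps (m + 1) (by omega) le_rfl
    rw [abs_mul, abs_sq]
    have h1 : |pad1 D m + pad1 D (m + 1)| ≤ 2 * ε := by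
      rw [abs_of_nonneg (by linarith [hDm.1, hDm1.1])]
      linarith [hDm.2, hDm1.2]
    calc |pad1 D m + pad1 D (m + 1)| * (pad1 v m) ^ 2
        ≤ (2 * ε) * (pad1 v m) ^ 2 := mul_le_mul_of_nonneg_right h1 (sq_nonneg _)
      _ ≤ (2 * ε) * M := mul_le_mul_of_nonneg_left (hvM m) (by linarith)
      _ = 2 * (ε * M) := by ring
  -- assemble
  have hS : |∑ i ∈ Finset.Icc 1 (m - 1), (pad1 D i - pad1 D (i + 2)) * (pad1 v i) ^ 2|
      ≤ 2 * h * L * Sv + ((m : ℝ) - i₀) * (ε * M) := by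
    calc |∑ i ∈ Finset.Icc 1 (m - 1), (pad1 D i - pad1 D (i + 2)) * (pad1 v i) ^ 2|
        ≤ ∑ i ∈ Finset.Icc 1 (m - 1), |(pad1 D i - pad1 D (i + 2)) * (pad1 v i) ^ 2| :=
          Finset.abs_sum_le_sum_abs _ _
      _ ≤ ∑ i ∈ Finset.Icc 1 (m - 1),
            (2 * h * L * (pad1 v i) ^ 2 + (if i₀ ≤ i then ε * M else 0)) :=
          Finset.sum_le_sum hterm
      _ = (∑ i ∈ Finset.Icc 1 (m - 1), (2 * h * L * (pad1 v i) ^ 2))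
            + ∑ i ∈ Finset.Icc 1 (m - 1), (if i₀ ≤ i then ε * M else 0) :=
          Finset.sum_add_distrib
      _ ≤ 2 * h * L * Sv + ((m : ℝ) - i₀) * (ε * M) := add_le_add hsum1 hsum2
  have habs2 : |term2 m Ma D v| ≤
      (Ma / 4) * (2 * h * L * Sv + ((m : ℝ) - i₀) * (ε * M) + 2 * (ε * M)) := by
    rw [term2, abs_mul, abs_of_pos (by positivity : (0:ℝ) < Ma / 4)]
    apply mul_le_mul_of_nonneg_left _ (by positivity)
    calc |∑ i ∈ Finset.Icc 1 (m - 1), (pad1 D i - pad1 D (i + 2)) * (pad1 v i) ^ 2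
          + (pad1 D m + pad1 D (m + 1)) * (pad1 v m) ^ 2|
        ≤ |∑ i ∈ Finset.Icc 1 (m - 1), (pad1 D i - pad1 D (i + 2)) * (pad1 v i) ^ 2|
          + |(pad1 D m + pad1 D (m + 1)) * (pad1 v m) ^ 2| := abs_add_le _ _
      _ ≤ 2 * h * L * Sv + ((m : ℝ) - i₀) * (ε * M) + 2 * (ε * M) := add_le_add hS hT
  have hmi : (0:ℝ) ≤ (m : ℝ) - i₀ := by
    exact sub_nonneg.2 (by exact_mod_cast hi₀m)
  nlinarith [mul_nonneg hε hM0, mul_nonneg hmi (mul_nonneg hε hM0), hMa.le]
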